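/- arXiv:1701.09165 — 4 statements merged into one kernel-verified Lean document; each statement's English description precedes it below -/
import Mathlib

section
/- Over a field of characteristic 3, the coefficient a₂ of the binary quartic f = Σ_{i=0}^{4} a_i x^i z^{4−i} is an invariant of weight 2 under SL₂: for every M ∈ SL₂(k), writing f(M·(x,z)) = Σ a'_i x^i z^{4−i}, one has a'_2 = a₂. -/
open MvPolynomial Matrix Fin.NatCast

private lemma fs1 (a b c d : ℕ) :
    (Finsupp.single 0 a + Finsupp.single 1 b : ℕ →₀ ℕ) = Finsupp.single 0 c + Finsupp.single 1 d
      ↔ a = c ∧ b = d := by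
  constructor
  · intro h
    constructor
    · have := DFunLike.congr_fun h 0; simpa using this
    · have := DFunLike.congr_fun h 1; simpa using this
  · rintro ⟨rfl, rfl⟩; rfl

private lemma fs2 (a c d : ℕ) :
    (Finsupp.single 0 a : ℕ →₀ ℕ) = Finsupp.single 0 c + Finsupp.single 1 d
      ↔ a = c ∧ d = 0 := by
  constructor
  · intro h
    constructor
    · have := DFunLike.congr_fun h 0; simpa using this
    · have := DFunLike.congr_fun h 1; simpa using this.symm
  · rintro ⟨rfl, rfl⟩; simp

private lemma fs3 (b c d : ℕ) :
    (Finsupp.single 1 b : ℕ →₀ ℕ) = Finsupp.single 0 c + Finsupp.single 1 d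
      ↔ c = 0 ∧ b = d := by
  constructor
  · intro h
    constructor
    · have := DFunLike.congr_fun h 0; simpa using this.symm
    · have := DFunLike.congr_fun h 1; simpa using this
  · rintro ⟨rfl, rfl⟩; simp

/-- In characteristic 3, the middle coefficient a₂ of a binary quartic
    f = Σ aᵢ xⁱ z^{4−i} is invariant under the full SL₂-action: for every
    M ∈ SL₂(k), writing f(M·(x,z)) = Σ a'ᵢ xⁱ z^{4−i}, one has a'₂ = a₂. -/
theorem quartic_middle_coeff_SL2_invariant {k : Type*} [Field k] [CharP k 3]
    (a : Fin 5 → k) (M : SpecialLinearGroup (Fin 2) k) :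
    (let x : MvPolynomial (Fin 2) k := X 0
     let z : MvPolynomial (Fin 2) k := X 1
     let f : MvPolynomial (Fin 2) k :=
       ∑ i ∈ Finset.range 5, C (a i) * x ^ i * z ^ (4 - i)
     let m : Matrix (Fin 2) (Fin 2) k := ↑M
     MvPolynomial.coeff (Finsupp.single 0 2 + Finsupp.single 1 2)
       (aeval ![C (m 0 0) * X 0 + C (m 0 1) * X 1,
                C (m 1 0) * X 0 + C (m 1 1) * X 1] f)) = a 2 := by
  have hdet : (M : Matrix (Fin 2) (Fin 2) k) 0 0 * (M : Matrix (Fin 2) (Fin 2) k) 1 1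
      - (M : Matrix (Fin 2) (Fin 2) k) 0 1 * (M : Matrix (Fin 2) (Fin 2) k) 1 0 = 1 := by
    have := M.2; rwa [Matrix.det_fin_two] at this
  have h3 : (3 : k) = 0 := CharP.cast_eq_zero k 3
  simp only [Finset.sum_range_succ, Finset.sum_range_zero, map_add, _root_.map_mul, map_pow,
    aeval_X, aeval_C, Matrix.cons_val_zero, Matrix.cons_val_one, Matrix.head_cons, zero_add]
  ring_nf
  have e2 : (2 : MvPolynomial ℕ k) = C (2:k) := (map_ofNat C 2).symm
  have e3 : (3 : MvPolynomial ℕ k) = C (3:k) := (map_ofNat C 3).symm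
  have e4 : (4 : MvPolynomial ℕ k) = C (4:k) := (map_ofNat C 4).symm
  have e6 : (6 : MvPolynomial ℕ k) = C (6:k) := (map_ofNat C 6).symm
  simp only [e2, e3, e4, e6, algebraMap_eq, MvPolynomial.X, X_pow_eq_monomial, C_apply,
    monomial_pow, monomial_mul, coeff_add, coeff_monomial]
  norm_num [Finsupp.smul_single, fs1, fs2, fs3]
  set A := (M : Matrix (Fin 2) (Fin 2) k) 0 0 with hA
  set B := (M : Matrix (Fin 2) (Fin 2) k) 0 1 with hB
  set G := (M : Matrix (Fin 2) (Fin 2) k) 1 0 with hG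
  set D := (M : Matrix (Fin 2) (Fin 2) k) 1 1 with hD
  linear_combination (a 2) * (A*D - B*G + 1) * hdet
    + (2 * a 0 * G^2 * D^2 + A*B*G*D * a 2 + A*B^2*G * a 3 + A*G*D^2 * a 1
       + A^2*B*D * a 3 + 2*A^2*B^2 * a 4 + B*G^2*D * a 1 + A*B*G*D * a 2) * h3
end

section
/- Over a field of characteristic 3, with f = Σ_{i=0}^{16} a_i x^i z^{16−i} a binary form of degree 16 and C = a₁₁ x⁶, C is not a covariant of f: for M = [[1,1],[0,1]] ∈ SL₂(k), the transformed polynomial C(M·f, M⁻¹·(x,z)) equals (x+2z)⁶(a₁₁ + a₁₄), which differs from C (as a polynomial in the a_i, x, z). -/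
open MvPolynomial

section Aux
variable {k : Type*} [Field k] [CharP k 3]

local notation "R" => MvPolynomial (Fin 17) k

lemma aux_single (m n p q : ℕ) :
    (Finsupp.single (0 : Fin 2) m + Finsupp.single 1 n =
      Finsupp.single 0 p + Finsupp.single 1 q) ↔ (m = p ∧ n = q) := by
  constructor
  · intro h
    constructor
    · have := DFunLike.congr_fun h 0; simpa using this
    · have := DFunLike.congr_fun h 1; simpa using this
  · rintro ⟨rfl, rfl⟩; rfl

lemma coeff_term (i : ℕ) (hi : i ≤ 16) :
    coeff (Finsupp.single 0 11 + Finsupp.single 1 5)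
      (((X 0 + X 1 : MvPolynomial (Fin 2) R)) ^ i * X 1 ^ (16 - i)) =
      ((i.choose 11 : ℕ) : R) := by
  rw [add_pow, Finset.sum_mul, coeff_sum]
  have step : ∀ m ∈ Finset.range (i + 1),
      coeff (Finsupp.single 0 11 + Finsupp.single 1 5)
        ((X (0 : Fin 2) : MvPolynomial (Fin 2) R) ^ m * X 1 ^ (i - m) * (i.choose m : MvPolynomial (Fin 2) R) * X 1 ^ (16 - i))
      = ((i.choose m : ℕ) : R) * (if m = 11 then 1 else 0) := by
    intro m hm
    have hm' : m ≤ i := Nat.lt_succ_iff.mp (Finset.mem_range.mp hm)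
    have h1 : (X (0 : Fin 2) : MvPolynomial (Fin 2) R) ^ m * X 1 ^ (i - m) * (i.choose m : MvPolynomial (Fin 2) R) * X 1 ^ (16 - i)
        = (C ((i.choose m : ℕ) : R)) * (X 0 ^ m * X 1 ^ (i - m + (16 - i))) := by
      rw [map_natCast (C : R →+* MvPolynomial (Fin 2) R)]; ring
    rw [h1, show i - m + (16 - i) = 16 - m by omega, coeff_C_mul,
      X_pow_eq_monomial, X_pow_eq_monomial, monomial_mul, one_mul, coeff_monomial]
    simp only [aux_single]
    by_cases h : m = 11 <;> simp [h] <;> omega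
  rw [Finset.sum_congr rfl step]
  simp only [mul_ite, mul_one, mul_zero]
  rw [Finset.sum_ite_eq' (Finset.range (i + 1)) 11 (fun m => ((i.choose m : ℕ) : R))]
  split_ifs with h
  · rfl
  · rw [Nat.choose_eq_zero_of_lt (by simp at h; omega), Nat.cast_zero]

lemma char3 : CharP R 3 := inferInstance

open Fin.NatCast in
lemma a11_eq :
    MvPolynomial.coeff (Finsupp.single 0 11 + Finsupp.single 1 (16 - 11))
      (aeval ![(X 0 : MvPolynomial (Fin 2) R) + X 1, X 1]
        ((∑ i ∈ Finset.range 17, C (X (i : Fin 17)) * (X 0) ^ i * (X 1) ^ (16 - i) :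
          MvPolynomial (Fin 2) R)))
    = X 11 + X 14 := by
  rw [map_sum, show (16 - 11 : ℕ) = 5 by norm_num]
  rw [coeff_sum]
  have step : ∀ i ∈ Finset.range 17,
      coeff (Finsupp.single 0 11 + Finsupp.single 1 5)
        (aeval ![(X 0 : MvPolynomial (Fin 2) R) + X 1, X 1]
          ((C (X (i : Fin 17)) * (X 0) ^ i * (X 1) ^ (16 - i) : MvPolynomial (Fin 2) R)))
      = X (i : Fin 17) * ((i.choose 11 : ℕ) : R) := by
    intro i hi
    have hi' : i ≤ 16 := Nat.lt_succ_iff.mp (Finset.mem_range.mp hi)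
    rw [map_mul, map_mul, map_pow, map_pow, aeval_X, aeval_X, aeval_C]
    simp only [Matrix.cons_val_zero, Matrix.cons_val_one, Matrix.head_cons]
    rw [MvPolynomial.algebraMap_eq, mul_assoc, coeff_C_mul, coeff_term i hi']
  rw [Finset.sum_congr rfl step]
  simp only [Finset.sum_range_succ, Finset.sum_range_zero]
  norm_num [Nat.choose]
  have h3 : ((3 : ℕ) : R) = 0 := CharP.cast_eq_zero R 3
  push_cast at h3 ⊢
  have e1 : ((12 : R)) = 0 := by linear_combination 4 * h3
  have e2 : ((78 : R)) = 0 := by linear_combination 26 * h3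
  have e3 : ((364 : R)) = 1 := by linear_combination 121 * h3
  have e4 : ((1365 : R)) = 0 := by linear_combination 455 * h3
  have e5 : ((4368 : R)) = 0 := by linear_combination 1456 * h3
  rw [e1, e2, e3, e4, e5]
  ring_nf
end Aux

open Fin.NatCast in
/-- Counterexample to Hilbert's differential characterization in characteristic 3:
    for the generic binary form f of degree 16 and C = a₁₁x⁶, the transform of C
    by M = [[1,1],[0,1]] ∈ SL₂ (coefficients a'ᵢ of f(x+z,z), variables (x,z) ↦
    M⁻¹(x,z) = (x−z,z) = (x+2z,z)) equals (x+2z)⁶(a₁₁+a₁₄), which differs from C. -/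
theorem not_covariant_char3 {k : Type*} [Field k] [CharP k 3] :
    (let f : MvPolynomial (Fin 2) (MvPolynomial (Fin 17) k) :=
       ∑ i ∈ Finset.range 17, C (X (i : Fin 17)) * (X 0) ^ i * (X 1) ^ (16 - i)
     -- coefficients of f(x + z, z)
     let a' : ℕ → MvPolynomial (Fin 17) k := fun i =>
       MvPolynomial.coeff (Finsupp.single 0 i + Finsupp.single 1 (16 - i))
         (aeval ![(X 0 : MvPolynomial (Fin 2) (MvPolynomial (Fin 17) k)) + X 1,
                  X 1] f)
     let Ctrans : MvPolynomial (Fin 2) (MvPolynomial (Fin 17) k) :=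
       C (a' 11) * ((X 0 : MvPolynomial (Fin 2) (MvPolynomial (Fin 17) k)) - X 1) ^ 6
     Ctrans = C ((X 11 : MvPolynomial (Fin 17) k) + X 14) *
         ((X 0 : MvPolynomial (Fin 2) (MvPolynomial (Fin 17) k)) + 2 * X 1) ^ 6 ∧
       Ctrans ≠ C ((X 11 : MvPolynomial (Fin 17) k)) *
         (X 0 : MvPolynomial (Fin 2) (MvPolynomial (Fin 17) k)) ^ 6) := by
  intro f a' Ctrans
  have ha : a' 11 = X 11 + X 14 := a11_eq
  have h3 : ((3 : ℕ) : MvPolynomial (Fin 2) (MvPolynomial (Fin 17) k)) = 0 :=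
    CharP.cast_eq_zero _ 3
  push_cast at h3
  have hXZ : (X 0 : MvPolynomial (Fin 2) (MvPolynomial (Fin 17) k)) - X 1
      = X 0 + 2 * X 1 := by linear_combination (-(X (1 : Fin 2))) * h3
  have hC : Ctrans = C ((X 11 : MvPolynomial (Fin 17) k) + X 14) *
      ((X 0 : MvPolynomial (Fin 2) (MvPolynomial (Fin 17) k)) + 2 * X 1) ^ 6 := by
    show C (a' 11) * _ = _
    rw [ha, hXZ]
  refine ⟨hC, ?_⟩
  rw [hC]
  intro h
  have := congrArg
    (eval₂Hom ((MvPolynomial.eval (fun _ : Fin 17 => (1 : k))).comp (RingHom.id _))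
      (fun j : Fin 2 => if j = 0 then (0 : k) else 1)) h
  simp [eval₂Hom_C] at this
  have h2 : (2 : k) ≠ 0 := by
    have hk : ((3 : ℕ) : k) = 0 := CharP.cast_eq_zero k 3
    push_cast at hk
    intro h0
    exact one_ne_zero (by linear_combination hk - h0 : (1 : k) = 0)
  rcases this with h' | h'
  · exact h2 (by linear_combination h')
  · exact h2 h'
end

section
/- Conversely to the torus-invariance lemma: if C = Σ_{l=0}^{m} C_l x^l z^{m−l} with each C_l ≠ 0 homogeneous of degree d in a₀,…,a_n, and C is invariant under the substitution a_i ↦ λ^{n−2i}a_i, x ↦ λx, z ↦ λ⁻¹z for all λ in an infinite field k, then each C_l is isobaric of weight w + l for some fixed integer w satisfying nd − 2w = m. -/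
open MvPolynomial

private lemma zpow_prod_sum' {G : Type*} [CommGroup G] {ι : Type*} (g : G) (s : Finset ι)
    (f : ι → ℤ) : ∏ i ∈ s, g ^ f i = g ^ (∑ i ∈ s, f i) := by
  induction s using Finset.cons_induction with
  | empty => simp
  | cons a s ha ih => simp [Finset.prod_cons, Finset.sum_cons, zpow_add, ih]

private lemma inf_field_zpow_eq_one {k : Type*} [Field k] [Infinite k] (E : ℤ)
    (h : ∀ lam : kˣ, lam ^ E = 1) : E = 0 := by
  by_contra hE
  have hN : E.natAbs ≠ 0 := Int.natAbs_ne_zero.2 hE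
  have h' : ∀ lam : kˣ, lam ^ E.natAbs = 1 := by
    intro lam
    rcases Int.natAbs_eq E with he | he
    · rw [← zpow_natCast, ← he, h]
    · have h2 := h lam
      rw [he, zpow_neg] at h2
      rw [← zpow_natCast]
      exact inv_injective (by simpa using h2.symm)
  set p : Polynomial k := Polynomial.X ^ E.natAbs - Polynomial.C 1 with hp
  have hp0 : p ≠ 0 := Polynomial.X_pow_sub_C_ne_zero (Nat.pos_of_ne_zero hN) 1
  have hfin : {x : k | Polynomial.IsRoot p x}.Finite := Polynomial.finite_setOf_isRoot hp0
  have hsub : {x : k | x ≠ 0} ⊆ {x : k | Polynomial.IsRoot p x} := by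
    intro x hx
    have h1 := h' (Units.mk0 x hx)
    have h2 : (x : k) ^ E.natAbs = 1 := by
      have := congrArg (Units.val) h1; simpa using this
    simp [Polynomial.IsRoot, hp, h2]
  have hinf : {x : k | x ≠ 0}.Infinite := by
    exact (Set.finite_singleton (0 : k)).infinite_compl
  exact hinf (hfin.subset hsub)

private lemma eval₂Hom_scale_monomial {ι : Type*} {R : Type*} [CommSemiring R] (c : ι → R)
    (u : ι →₀ ℕ) (a : R) :
    eval₂Hom (C : R →+* MvPolynomial ι R) (fun i => C (c i) * X i) (monomial u a)
      = monomial u (a * u.prod fun i e => c i ^ e) := by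
  rw [coe_eval₂Hom, eval₂_monomial, monomial_eq]
  rw [Finsupp.prod, Finsupp.prod, Finsupp.prod]
  rw [map_mul]
  simp only [mul_pow, Finset.prod_mul_distrib, ← map_pow (C : R →+* MvPolynomial ι R)]
  rw [map_prod]
  ring

private lemma coeff_eval₂Hom_scale {ι : Type*} {R : Type*} [CommSemiring R] (c : ι → R)
    (P : MvPolynomial ι R) (mo : ι →₀ ℕ) :
    coeff mo (eval₂Hom (C : R →+* MvPolynomial ι R) (fun i => C (c i) * X i) P)
      = (mo.prod fun i e => c i ^ e) * coeff mo P := by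
  classical
  conv_lhs => rw [P.as_sum, map_sum]
  simp only [eval₂Hom_scale_monomial, coeff_sum, coeff_monomial]
  rw [Finset.sum_ite_eq' P.support mo]
  by_cases h : mo ∈ P.support
  · simp [h, mul_comm]
  · simp [h, notMem_support_iff.1 h]

private lemma mono_fin2 {A : Type*} [CommSemiring A] (r s t : A) (a b : ℕ) :
    (C r * (C s * X 0) ^ a * (C t * X 1) ^ b : MvPolynomial (Fin 2) A)
      = monomial (Finsupp.single 0 a + Finsupp.single 1 b) (r * s ^ a * t ^ b) := by
  rw [mul_pow, mul_pow, ← C_pow, ← C_pow, X_pow_eq_monomial, X_pow_eq_monomial]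
  rw [show (C r * (C (s ^ a) * monomial (Finsupp.single 0 a) 1) *
        (C (t ^ b) * monomial (Finsupp.single (1 : Fin 2) b) 1) : MvPolynomial (Fin 2) A)
      = C (r * s ^ a * t ^ b) *
        (monomial (Finsupp.single 0 a) 1 * monomial (Finsupp.single 1 b) 1) by
    rw [map_mul, map_mul]; ring]
  rw [monomial_mul, C_mul_monomial]
  simp

private lemma mono_fin2' {A : Type*} [CommSemiring A] (r : A) (a b : ℕ) :
    (C r * X 0 ^ a * X 1 ^ b : MvPolynomial (Fin 2) A)
      = monomial (Finsupp.single 0 a + Finsupp.single 1 b) r := by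
  have := mono_fin2 r (1 : A) 1 a b
  simpa using this

/-- Torus invariance (Lemma 1, "only if" direction): over an infinite field, if
    C = Σ_{l=0}^m C_l x^l z^{m−l} with each C_l ≠ 0 homogeneous of degree d, and
    C is invariant under aᵢ ↦ λ^{n−2i} aᵢ, x ↦ λx, z ↦ λ⁻¹z for all λ ∈ kˣ,
    then there is a fixed w with nd = m + 2w such that each C_l is isobaric of
    weight w + l. -/
theorem torus_invariance_converse {k : Type*} [Field k] [Infinite k]
    (n d m : ℕ) (Cl : ℕ → MvPolynomial (Fin (n + 1)) k)
    (hne : ∀ l ≤ m, Cl l ≠ 0)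
    (hhom : ∀ l ≤ m, (Cl l).IsHomogeneous d)
    (hinv : ∀ lam : kˣ,
      (let R := MvPolynomial (Fin (n + 1)) k
       let S := MvPolynomial (Fin 2) R
       let σ : R →+* R := eval₂Hom (C : k →+* R)
         (fun i : Fin (n + 1) =>
           C (((lam ^ ((n : ℤ) - 2 * (i : ℤ))) : kˣ) : k) * X i)
       let T : S →+* S := eval₂Hom ((C : R →+* S).comp σ)
         (fun j : Fin 2 =>
           if j = 0 then C (C ((lam : k))) * X 0
           else C (C (((lam⁻¹ : kˣ) : k))) * X 1)
       let Cpoly : S := ∑ l ∈ Finset.range (m + 1), C (Cl l) * (X 0) ^ l * (X 1) ^ (m - l)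
       T Cpoly = Cpoly)) :
    ∃ w : ℕ, n * d = m + 2 * w ∧
      ∀ l ≤ m, ∀ mo ∈ (Cl l).support,
        (∑ i : Fin (n + 1), (i : ℕ) * mo i) = w + l := by
  classical
  have hD : ∀ j ≤ m, ∀ l ≤ m,
      (Finsupp.single (0 : Fin 2) j + Finsupp.single 1 (m - j)
        = Finsupp.single 0 l + Finsupp.single 1 (m - l)) → j = l := by
    intro j hj l hl h
    have h0 := congrArg (fun f : Fin 2 →₀ ℕ => f 0) h
    simpa [Finsupp.single_apply] using h0
  -- the key exponent identity
  have key : ∀ l ≤ m, ∀ mo ∈ (Cl l).support,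
      ((∑ i : Fin (n + 1), ((n : ℤ) - 2 * (i : ℤ)) * (mo i : ℤ)) + l - (m - l : ℕ) : ℤ) = 0 := by
    intro l hl mo hmo
    apply inf_field_zpow_eq_one (k := k)
    intro lam
    have h := hinv lam
    dsimp only at h
    rw [map_sum] at h
    have hL : ∀ j ∈ Finset.range (m + 1),
        (eval₂Hom
          ((C : MvPolynomial (Fin (n + 1)) k →+*
              MvPolynomial (Fin 2) (MvPolynomial (Fin (n + 1)) k)).comp
            (eval₂Hom (C : k →+* MvPolynomial (Fin (n + 1)) k)
              (fun i : Fin (n + 1) =>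
                C (((lam ^ ((n : ℤ) - 2 * (i : ℤ))) : kˣ) : k) * X i)))
          (fun j : Fin 2 =>
            if j = 0 then C (C ((lam : k))) * X 0
            else C (C (((lam⁻¹ : kˣ) : k))) * X 1))
          (C (Cl j) * (X 0) ^ j * (X 1) ^ (m - j))
        = monomial (Finsupp.single 0 j + Finsupp.single 1 (m - j))
            ((eval₂Hom (C : k →+* MvPolynomial (Fin (n + 1)) k)
              (fun i : Fin (n + 1) =>
                C (((lam ^ ((n : ℤ) - 2 * (i : ℤ))) : kˣ) : k) * X i)) (Cl j)
              * C ((lam : k)) ^ j * C (((lam⁻¹ : kˣ) : k)) ^ (m - j)) := by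
      intro j hj
      rw [map_mul, map_mul, map_pow, map_pow]
      simp only [coe_eval₂Hom, eval₂_C, eval₂_X, RingHom.comp_apply]
      rw [if_pos trivial, if_neg (by decide : ¬ (1 : Fin 2) = 0)]
      exact mono_fin2 _ _ _ _ _
    rw [Finset.sum_congr rfl hL] at h
    rw [Finset.sum_congr rfl (fun j (_ : j ∈ Finset.range (m + 1)) =>
      mono_fin2' (Cl j) j (m - j))] at h
    -- extract the coefficient of the (l, m-l) monomial
    have hcoef := congrArg (coeff (Finsupp.single 0 l + Finsupp.single 1 (m - l))) h
    rw [coeff_sum, coeff_sum] at hcoef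
    simp only [coeff_monomial] at hcoef
    have hsum : ∀ (r : ℕ → MvPolynomial (Fin (n + 1)) k),
        (∑ j ∈ Finset.range (m + 1),
          if Finsupp.single (0 : Fin 2) j + Finsupp.single 1 (m - j)
            = Finsupp.single 0 l + Finsupp.single 1 (m - l) then r j else 0) = r l := by
      intro r
      rw [Finset.sum_congr rfl (fun j hj => by
        rw [show (if Finsupp.single (0 : Fin 2) j + Finsupp.single 1 (m - j)
            = Finsupp.single 0 l + Finsupp.single 1 (m - l) then r j else 0)
            = (if j = l then r j else 0) by
          by_cases hjl : j = l
          · simp [hjl]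
          · rw [if_neg hjl, if_neg (fun hdd => hjl (hD j (Nat.lt_succ_iff.mp
              (Finset.mem_range.mp hj)) l hl hdd))]])]
      rw [Finset.sum_ite_eq' (Finset.range (m + 1)) l r, if_pos (Finset.mem_range.mpr
        (Nat.lt_succ_iff.mpr hl))]
    rw [hsum, hsum] at hcoef
    -- hcoef : σ (Cl l) * C lam ^ l * C lam⁻¹ ^ (m - l) = Cl l
    have hcc := congrArg (coeff mo) hcoef
    rw [show (eval₂Hom (C : k →+* MvPolynomial (Fin (n + 1)) k)
            (fun i : Fin (n + 1) =>
              C (((lam ^ ((n : ℤ) - 2 * (i : ℤ))) : kˣ) : k) * X i)) (Cl l)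
          * C ((lam : k)) ^ l * C (((lam⁻¹ : kˣ) : k)) ^ (m - l)
        = C ((lam : k) ^ l) * (C ((((lam⁻¹ : kˣ) : k)) ^ (m - l)) *
          (eval₂Hom (C : k →+* MvPolynomial (Fin (n + 1)) k)
            (fun i : Fin (n + 1) =>
              C (((lam ^ ((n : ℤ) - 2 * (i : ℤ))) : kˣ) : k) * X i)) (Cl l)) by
      rw [map_pow, map_pow]; ring] at hcc
    rw [coeff_C_mul, coeff_C_mul,
      coeff_eval₂Hom_scale (fun i : Fin (n + 1) =>
        (((lam ^ ((n : ℤ) - 2 * (i : ℤ))) : kˣ) : k))] at hcc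
    have ha : coeff mo (Cl l) ≠ 0 := mem_support_iff.mp hmo
    have hunit : ((lam : k)) ^ l * ((((lam⁻¹ : kˣ) : k)) ^ (m - l) *
        (mo.prod fun i e => (((lam ^ ((n : ℤ) - 2 * (i : ℤ))) : kˣ) : k) ^ e)) = 1 := by
      have := hcc
      field_simp at this ⊢
      linear_combination this
    -- rewrite the scalar as the value of a single unit power
    have hprod : (mo.prod fun i e => (((lam ^ ((n : ℤ) - 2 * (i : ℤ))) : kˣ) : k) ^ e)
        = (((lam ^ (∑ i : Fin (n + 1), ((n : ℤ) - 2 * (i : ℤ)) * (mo i : ℤ))) : kˣ) : k) := by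
      rw [Finsupp.prod_fintype _ _ (fun i => pow_zero _)]
      have heach : ∀ i : Fin (n + 1),
          ((((lam ^ ((n : ℤ) - 2 * (i : ℤ))) : kˣ) : k)) ^ (mo i)
          = (((lam ^ (((n : ℤ) - 2 * (i : ℤ)) * (mo i : ℤ))) : kˣ) : k) := by
        intro i
        rw [← Units.val_pow_eq_pow_val, ← zpow_natCast (lam ^ ((n : ℤ) - 2 * (i : ℤ))),
          ← zpow_mul]
      rw [Finset.prod_congr rfl (fun i _ => heach i),
        ← zpow_prod_sum' lam Finset.univ (fun i : Fin (n + 1) => ((n : ℤ) - 2 * (i : ℤ)) * (mo i : ℤ))]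
      exact (map_prod (Units.coeHom k) _ _).symm
    have hl' : ((lam : k)) ^ l = (((lam ^ (l : ℤ)) : kˣ) : k) := by
      rw [← Units.val_pow_eq_pow_val, ← zpow_natCast]
    have hml : ((((lam⁻¹ : kˣ) : k)) ^ (m - l)) = (((lam ^ (-((m - l : ℕ) : ℤ))) : kˣ) : k) := by
      rw [← Units.val_pow_eq_pow_val, ← zpow_natCast, zpow_neg, ← inv_zpow]
    rw [hprod, hl', hml, ← Units.val_mul, ← Units.val_mul, ← zpow_add, ← zpow_add] at hunit
    have : (lam ^ ((l : ℤ) + (-((m - l : ℕ) : ℤ) +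
        (∑ i : Fin (n + 1), ((n : ℤ) - 2 * (i : ℤ)) * (mo i : ℤ))))) = 1 :=
      Units.ext (by simpa using hunit)
    rw [show ((∑ i : Fin (n + 1), ((n : ℤ) - 2 * (i : ℤ)) * (mo i : ℤ)) + l - (m - l : ℕ) : ℤ)
        = ((l : ℤ) + (-((m - l : ℕ) : ℤ) +
          (∑ i : Fin (n + 1), ((n : ℤ) - 2 * (i : ℤ)) * (mo i : ℤ)))) by ring]
    exact this
  -- convert the key identity into weight equations
  have key2 : ∀ l ≤ m, ∀ mo ∈ (Cl l).support,
      ((n : ℤ) * d + 2 * l : ℤ) = (m : ℤ) + 2 * (∑ i : Fin (n + 1), (i : ℕ) * mo i : ℕ) := by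
    intro l hl mo hmo
    have hk := key l hl mo hmo
    have hdeg : (∑ i : Fin (n + 1), (mo i : ℤ)) = (d : ℤ) := by
      have h1 := hhom l hl (mem_support_iff.mp hmo)
      rw [Finsupp.weight_apply, Finsupp.sum_fintype] at h1
      · have : (∑ i : Fin (n + 1), mo i) = d := by simpa using h1
        exact_mod_cast this
      · intro i; simp
    have hsplit : (∑ i : Fin (n + 1), ((n : ℤ) - 2 * (i : ℤ)) * (mo i : ℤ))
        = (n : ℤ) * (∑ i : Fin (n + 1), (mo i : ℤ))
          - 2 * (∑ i : Fin (n + 1), (i : ℤ) * (mo i : ℤ)) := by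
      rw [Finset.mul_sum, Finset.mul_sum, ← Finset.sum_sub_distrib]
      exact Finset.sum_congr rfl (fun i _ => by ring)
    have hwt : (∑ i : Fin (n + 1), (i : ℤ) * (mo i : ℤ))
        = ((∑ i : Fin (n + 1), (i : ℕ) * mo i : ℕ) : ℤ) := by
      push_cast; rfl
    rw [hsplit, hdeg, hwt] at hk
    have hlm : ((m - l : ℕ) : ℤ) = (m : ℤ) - (l : ℤ) := by
      omega
    rw [hlm] at hk
    linarith [hk]
  -- pick the base weight from C_0
  obtain ⟨mo0, hmo0⟩ := (support_nonempty.mpr (hne 0 (Nat.zero_le m)))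
  refine ⟨∑ i : Fin (n + 1), (i : ℕ) * mo0 i, ?_, ?_⟩
  · have h0 := key2 0 (Nat.zero_le m) mo0 hmo0
    rw [← Nat.cast_mul] at h0
    omega
  · intro l hl mo hmo
    have h0 := key2 0 (Nat.zero_le m) mo0 hmo0
    have h1 := key2 l hl mo hmo
    rw [← Nat.cast_mul] at h0 h1
    omega
end

section
/- Over F₅, let f = Σ_{i=0}^{6} a_i x^i z^{6−i} be the generic binary sextic. The covariant (1/z³)·∂³(f²)/∂x³ is not in the F₅-subalgebra of k[a₀,…,a₆][x,z] generated by f and C₁ = (1/z²)·∂²f/∂x². Specifically, (1/z³)∂³(f²)/∂x³ is homogeneous of degree 2 in the aᵢ; the degree-2 part of the subalgebra is spanned by f², f·C₁, C₁², whose coefficients of z⁶ (the x-free terms) are a₀², 2a₀a₂, 4a₂² respectively, none of whose linear combinations can equal the z⁶-coefficient 4a₀a₃ + 4a₁a₂ of (1/z³)∂³(f²)/∂x³. -/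
open MvPolynomial

namespace SexticAux

lemma poly_num (a : ℕ) (b : ZMod 5) (h : ((a:ℕ) : ZMod 5) = b) :
    ((a:ℕ) : Polynomial (ZMod 5)) = Polynomial.C b := by
  rw [← map_natCast (Polynomial.C (R:=ZMod 5)) a, h]

lemma pderiv_two : (pderiv (0 : Fin 2)) (2 : MvPolynomial (Fin 2) (Polynomial (ZMod 5))) = 0 := by
  rw [show (2: MvPolynomial (Fin 2) (Polynomial (ZMod 5))) = 1 + 1 by norm_num, map_add, pderiv_one]
  simp

noncomputable def v : Fin 7 → Polynomial (ZMod 5) :=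
  ![Polynomial.X^2, 0, 3*Polynomial.X^2, 3*Polynomial.X, 0, 0, 0]

noncomputable def g : MvPolynomial (Fin 7) (ZMod 5) →+* Polynomial (ZMod 5) :=
  (MvPolynomial.aeval v).toRingHom

noncomputable def F : MvPolynomial (Fin 2) (Polynomial (ZMod 5)) :=
  C (Polynomial.X^2) * (X 1)^6 + C (3*Polynomial.X^2) * (X 0)^2 * (X 1)^4
    + C (3*Polynomial.X) * (X 0)^3 * (X 1)^3

noncomputable def ev : MvPolynomial (Fin 2) (Polynomial (ZMod 5)) →ₐ[Polynomial (ZMod 5)] Polynomial (ZMod 5) :=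
  aeval ![0, 1]

noncomputable def phi : MvPolynomial (Fin 2) (MvPolynomial (Fin 7) (ZMod 5)) →ₐ[ZMod 5] Polynomial (ZMod 5) :=
{ toRingHom := ev.toRingHom.comp (MvPolynomial.map g),
  commutes' := fun r => by
    have h : (algebraMap (ZMod 5) (MvPolynomial (Fin 2) (MvPolynomial (Fin 7) (ZMod 5)))) r
        = MvPolynomial.C (MvPolynomial.C r) := rfl
    simp [h, ev, g] }

lemma phi_apply (q : MvPolynomial (Fin 2) (MvPolynomial (Fin 7) (ZMod 5))) :
    phi q = ev (MvPolynomial.map g q) := rfl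

lemma map_iter (n : ℕ) (q : MvPolynomial (Fin 2) (MvPolynomial (Fin 7) (ZMod 5))) :
    MvPolynomial.map g ((⇑(pderiv (0 : Fin 2)))^[n] q)
      = (⇑(pderiv (0 : Fin 2)))^[n] (MvPolynomial.map g q) := by
  induction n generalizing q with
  | zero => rfl
  | succ n ih =>
    rw [Function.iterate_succ_apply', Function.iterate_succ_apply', ← pderiv_map, ih]

set_option maxHeartbeats 1000000 in
lemma map_f : MvPolynomial.map g
    (∑ i ∈ Finset.range 7, C (X (Fin.ofNat 7 i)) * (X 0) ^ i * (X 1) ^ (6 - i)) = F := by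
  simp [Finset.sum_range_succ, g, v, F, Matrix.cons_val_succ,
    show (![Polynomial.X^2, 0, 3*Polynomial.X^2, 3*Polynomial.X, 0, 0, 0] : Fin 7 → Polynomial (ZMod 5)) 5 = 0 from rfl,
    show (![Polynomial.X^2, 0, 3*Polynomial.X^2, 3*Polynomial.X, 0, 0, 0] : Fin 7 → Polynomial (ZMod 5)) 6 = 0 from rfl]
  rfl

set_option maxHeartbeats 1000000 in
lemma evD3 : ev ((⇑(pderiv (0 : Fin 2)))^[3] (F^2)) = Polynomial.X^3 := by
  simp only [Function.iterate_succ, Function.iterate_zero, Function.comp_apply, id_eq, F]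
  simp only [pderiv_pow, pderiv_mul, map_add, pderiv_C, pderiv_X_self, pderiv_X]
  simp [ev, pderiv_two]
  ring_nf
  rw [show (36 : Polynomial (ZMod 5)) = ((36:ℕ) : Polynomial (ZMod 5)) by norm_cast,
    poly_num 36 1 (by decide), map_one, mul_one]

set_option maxHeartbeats 1000000 in
lemma evD2 : ev ((⇑(pderiv (0 : Fin 2)))^[2] F) = Polynomial.X^2 := by
  simp only [Function.iterate_succ, Function.iterate_zero, Function.comp_apply, id_eq,
    pderiv_pow, pderiv_mul, pderiv_C, pderiv_X_self, F, map_add, pderiv_X]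
  simp [ev, pderiv_two]
  ring_nf
  rw [show (6 : Polynomial (ZMod 5)) = ((6:ℕ) : Polynomial (ZMod 5)) by norm_cast,
    poly_num 6 1 (by decide), map_one, mul_one]

lemma phi_z : phi (X 1 : MvPolynomial (Fin 2) (MvPolynomial (Fin 7) (ZMod 5))) = 1 := by
  simp [phi_apply, ev]

end SexticAux

open SexticAux in
/-- Over F₅, for the generic binary sextic f, the covariant (1/z³)∂³(f²)/∂x³ is
    not in the subalgebra generated by f and C₁ = (1/z²)∂²f/∂x². -/
theorem sextic_new_covariant_not_in_subalgebra :
    (let f : MvPolynomial (Fin 2) (MvPolynomial (Fin 7) (ZMod 5)) :=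
       ∑ i ∈ Finset.range 7, C (X (Fin.ofNat 7 i)) * (X 0) ^ i * (X 1) ^ (6 - i)
     ∀ C₁ P : MvPolynomial (Fin 2) (MvPolynomial (Fin 7) (ZMod 5)),
       (⇑(pderiv (0 : Fin 2)))^[2] f = (X 1) ^ 2 * C₁ →
       (⇑(pderiv (0 : Fin 2)))^[3] (f ^ 2) = (X 1) ^ 3 * P →
       P ∉ Algebra.adjoin (ZMod 5)
         ({f, C₁} : Set (MvPolynomial (Fin 2) (MvPolynomial (Fin 7) (ZMod 5))))) := by
  intro f C₁ P h₁ h₂ hmem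
  have hφf : phi f = Polynomial.X ^ 2 := by
    rw [phi_apply, show f = ∑ i ∈ Finset.range 7, C (X (Fin.ofNat 7 i)) * (X 0) ^ i * (X 1) ^ (6 - i) from rfl, map_f]
    simp [ev, F]
  have hφC₁ : phi C₁ = Polynomial.X ^ 2 := by
    have := congrArg phi h₁
    rw [map_mul, map_pow, phi_z, one_pow, one_mul] at this
    rw [← this, phi_apply, map_iter, show f = ∑ i ∈ Finset.range 7, C (X (Fin.ofNat 7 i)) * (X 0) ^ i * (X 1) ^ (6 - i) from rfl, map_f, evD2]
  have hφP : phi P = Polynomial.X ^ 3 := by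
    have := congrArg phi h₂
    rw [map_mul, map_pow, phi_z, one_pow, one_mul] at this
    rw [← this, phi_apply, map_iter, map_pow, show f = ∑ i ∈ Finset.range 7, C (X (Fin.ofNat 7 i)) * (X 0) ^ i * (X 1) ^ (6 - i) from rfl, map_f, evD3]
  -- push through phi
  have hPin : phi P ∈ Algebra.adjoin (ZMod 5) (phi '' {f, C₁}) := by
    rw [← AlgHom.map_adjoin]
    exact Subalgebra.mem_map.mpr ⟨P, hmem, rfl⟩
  rw [hφP] at hPin
  have himg : phi '' {f, C₁} ⊆ {Polynomial.X ^ 2} := by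
    rw [Set.image_insert_eq, Set.image_singleton, hφf, hφC₁]
    simp
  have hPin2 : Polynomial.X ^ 3 ∈ Algebra.adjoin (ZMod 5) ({Polynomial.X ^ 2} : Set (Polynomial (ZMod 5))) :=
    Algebra.adjoin_mono himg hPin
  -- equalizer argument
  set τ : Polynomial (ZMod 5) →ₐ[ZMod 5] Polynomial (ZMod 5) := Polynomial.aeval (-Polynomial.X)
  have hle : Algebra.adjoin (ZMod 5) ({Polynomial.X ^ 2} : Set (Polynomial (ZMod 5)))
      ≤ AlgHom.equalizer τ (AlgHom.id (ZMod 5) (Polynomial (ZMod 5))) := by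
    apply Algebra.adjoin_le
    intro q hq
    rw [Set.mem_singleton_iff] at hq
    subst hq
    show τ (Polynomial.X ^ 2) = Polynomial.X ^ 2
    simp [τ]
  have := hle hPin2
  have heq : τ (Polynomial.X ^ 3) = Polynomial.X ^ 3 := this
  rw [show τ (Polynomial.X ^ 3) = -(Polynomial.X ^ 3) by simp [τ]; ring] at heq
  have hc := congrArg (fun p => Polynomial.coeff p 3) heq
  simp at hc
  exact absurd hc (by decide)
end
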